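/- Let ℓ ≥ 4 be an even integer and let r, m be integers with 2 ≤ r ≤ ℓ−2 and m ≥ ℓ+1. Let F₁ = (P_ℓ ∪ K̄_m) ⊗ T(m(r−1), r−1), F₂ = (K_{1,2} ∪ mK₂) ⊗ mK₂ ⊗ T(m(r−2), r−2), and F₃ = (K_{ℓ/2} ∪ K_{ℓ−1} ∪ K̄_m) ⊗ T(m(r−1), r−1). Then for every n, the graph K_{(ℓ−2)/2} ⊗ T(n − (ℓ−2)/2, r) is {F₁, F₂, F₃}-free; indeed, for each 1 ≤ i ≤ 3, deleting any set U of (ℓ−2)/2 vertices from F_i leaves a graph of chromatic number at least r+1. -/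

import Mathlib

open SimpleGraph

/-- `G` contains a (not necessarily induced) copy of `F`. -/
def ContainsCopy {V W : Type*} (F : SimpleGraph V) (G : SimpleGraph W) : Prop :=
  ∃ f : V → W, Function.Injective f ∧ ∀ ⦃a b : V⦄, F.Adj a b → G.Adj (f a) (f b)

/-- The join `G ⊗ H` of two graphs. -/
def gJoin {α β : Type*} (G : SimpleGraph α) (H : SimpleGraph β) : SimpleGraph (α ⊕ β) where
  Adj x y :=
    match x, y with
    | Sum.inl a, Sum.inl b => G.Adj a b
    | Sum.inr a, Sum.inr b => H.Adj a b
    | _, _ => True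
  symm := ⟨by rintro (a|a) (b|b) h <;> simp_all <;> exact h.symm⟩
  loopless := ⟨by rintro (a|a) h <;> simp_all⟩

/-- The disjoint union `G ∪ H` of two graphs. -/
def gUnion {α β : Type*} (G : SimpleGraph α) (H : SimpleGraph β) : SimpleGraph (α ⊕ β) where
  Adj x y :=
    match x, y with
    | Sum.inl a, Sum.inl b => G.Adj a b
    | Sum.inr a, Sum.inr b => H.Adj a b
    | _, _ => False
  symm := ⟨by rintro (a|a) (b|b) h <;> simp_all <;> exact h.symm⟩
  loopless := ⟨by rintro (a|a) h <;> simp_all⟩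

/-- The disjoint union `mH` of `m` copies of `H`. -/
def gCopies (m : ℕ) {α : Type*} (H : SimpleGraph α) : SimpleGraph (Fin m × α) where
  Adj x y := x.1 = y.1 ∧ H.Adj x.2 y.2
  symm := ⟨by rintro ⟨i, a⟩ ⟨j, b⟩ ⟨h1, h2⟩; exact ⟨h1.symm, h2.symm⟩⟩
  loopless := ⟨by rintro ⟨i, a⟩ ⟨_, h⟩; exact H.loopless.irrefl a h⟩

/-- Number of edges of a graph. -/
noncomputable def edgeCount {V : Type*} (G : SimpleGraph V) : ℕ := G.edgeSet.ncard

/-- `F₁ = (P_ℓ ∪ K̄_m) ⊗ T(m(r-1), r-1)`. -/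
def F₁ (ℓ r m : ℕ) :=
  gJoin (gUnion (pathGraph ℓ) (⊥ : SimpleGraph (Fin m))) (turanGraph (m * (r - 1)) (r - 1))

/-- `F₂ = (K_{1,2} ∪ mK₂) ⊗ mK₂ ⊗ T(m(r-2), r-2)`. -/
def F₂ (r m : ℕ) :=
  gJoin (gUnion (completeBipartiteGraph (Fin 1) (Fin 2)) (gCopies m (⊤ : SimpleGraph (Fin 2))))
    (gJoin (gCopies m (⊤ : SimpleGraph (Fin 2))) (turanGraph (m * (r - 2)) (r - 2)))

/-- `F₃ = (K_{ℓ/2} ∪ K_{ℓ-1} ∪ K̄_m) ⊗ T(m(r-1), r-1)`. -/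
def F₃ (ℓ r m : ℕ) :=
  gJoin (gUnion (gUnion (⊤ : SimpleGraph (Fin (ℓ / 2))) (⊤ : SimpleGraph (Fin (ℓ - 1))))
      (⊥ : SimpleGraph (Fin m)))
    (turanGraph (m * (r - 1)) (r - 1))

lemma clique_le_chrom {V ι : Type*} [Fintype ι] (G : SimpleGraph V) (f : ι → V)
    (hf : Function.Injective f) (hadj : ∀ i j : ι, i ≠ j → G.Adj (f i) (f j)) :
    (Fintype.card ι : ℕ∞) ≤ G.chromaticNumber := by
  classical
  have h : G.IsClique (Finset.univ.image f) := by
    intro a ha b hb hab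
    simp only [Finset.coe_image, Finset.coe_univ, Set.image_univ, Set.mem_range] at ha hb
    obtain ⟨i, rfl⟩ := ha; obtain ⟨j, rfl⟩ := hb
    exact hadj i j (fun h => hab (by rw [h]))
  have h2 := h.card_le_chromaticNumber
  rwa [Finset.card_image_of_injective _ hf, Finset.card_univ] at h2

lemma avoid_one {V : Type*} [Finite V] {t : ℕ} (g : Fin t → V) (hg : Function.Injective g)
    (U : Set V) (hU : U.ncard < t) : ∃ i, g i ∉ U := by
  by_contra h
  push_neg at h
  have hinj : Function.Injective (fun i : Fin t => (⟨g i, h i⟩ : U)) := by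
    intro i j hij
    exact hg (congrArg Subtype.val hij)
  have := Nat.card_le_card_of_injective _ hinj
  simp [Nat.card_coe_set_eq] at this
  omega

lemma avoid_pair {V : Type*} [Finite V] {t : ℕ} (g : Fin t → Fin 2 → V)
    (hg : Function.Injective (fun p : Fin t × Fin 2 => g p.1 p.2))
    (U : Set V) (hU : U.ncard < t) : ∃ i, g i 0 ∉ U ∧ g i 1 ∉ U := by
  by_contra h
  push_neg at h
  have hex : ∀ i : Fin t, ∃ c : Fin 2, g i c ∈ U := by
    intro i
    rcases Classical.em (g i 0 ∈ U) with h0 | h0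
    · exact ⟨0, h0⟩
    · exact ⟨1, h i h0⟩
  choose c hc using hex
  have hinj : Function.Injective (fun i : Fin t => (⟨g i (c i), hc i⟩ : U)) := by
    intro i j hij
    have h2 : (fun p : Fin t × Fin 2 => g p.1 p.2) (i, c i)
        = (fun p : Fin t × Fin 2 => g p.1 p.2) (j, c j) := congrArg Subtype.val hij
    exact congrArg Prod.fst (hg h2)
  have := Nat.card_le_card_of_injective _ hinj
  simp [Nat.card_coe_set_eq] at this
  omega

lemma avoid_pair_or {V : Type*} [Finite V] {t : ℕ} (g : Fin t → Fin 2 → V) (e : Fin 2 → V)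
    (hg : Function.Injective
      (fun p : Fin t × Fin 2 ⊕ Fin 2 => p.elim (fun q => g q.1 q.2) e))
    (U : Set V) (hU : U.ncard ≤ t) :
    (∃ i, g i 0 ∉ U ∧ g i 1 ∉ U) ∨ (e 0 ∉ U ∧ e 1 ∉ U) := by
  by_contra h
  push_neg at h
  obtain ⟨h1, h2⟩ := h
  have hex : ∀ i : Fin t, ∃ c : Fin 2, g i c ∈ U := by
    intro i
    rcases Classical.em (g i 0 ∈ U) with h0 | h0
    · exact ⟨0, h0⟩
    · exact ⟨1, h1 i h0⟩
  have hex2 : ∃ c : Fin 2, e c ∈ U := by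
    rcases Classical.em (e 0 ∈ U) with h0 | h0
    · exact ⟨0, h0⟩
    · exact ⟨1, h2 h0⟩
  choose c hc using hex
  obtain ⟨d, hd⟩ := hex2
  have hinj : Function.Injective (fun i : Fin t ⊕ Unit =>
      (i.elim (fun i => (⟨g i (c i), hc i⟩ : U)) (fun _ => ⟨e d, hd⟩))) := by
    rintro (i | i) (j | j) hij
    · have h3 := hg (a₁ := Sum.inl (i, c i)) (a₂ := Sum.inl (j, c j))
        (congrArg Subtype.val hij)
      simp only [Sum.inl.injEq, Prod.mk.injEq] at h3
      exact congrArg Sum.inl h3.1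
    · exact absurd (hg (a₁ := Sum.inl (i, c i)) (a₂ := Sum.inr d)
        (congrArg Subtype.val hij)) (by simp)
    · exact absurd (hg (a₁ := Sum.inr d) (a₂ := Sum.inl (j, c j))
        (congrArg Subtype.val hij)) (by simp)
    · simp
  have := Nat.card_le_card_of_injective _ hinj
  simp [Nat.card_coe_set_eq, Nat.card_eq_fintype_card] at this
  omega

lemma aux1 (ℓ r m : ℕ) (hℓ : 4 ≤ ℓ) (heven : Even ℓ) (hr2 : 2 ≤ r) (hm : ℓ + 1 ≤ m)
    (U : Set ((Fin ℓ ⊕ Fin m) ⊕ Fin (m * (r - 1)))) (hU : U.ncard ≤ (ℓ - 2) / 2) :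
    ((r : ℕ∞) + 1) ≤ ((F₁ ℓ r m).induce Uᶜ).chromaticNumber := by
  obtain ⟨k, hk⟩ := heven
  have hq1 : 1 ≤ r - 1 := by omega
  -- path part matching
  set gP : Fin (ℓ / 2) → Fin 2 → (Fin ℓ ⊕ Fin m) ⊕ Fin (m * (r-1)) :=
    fun i c => Sum.inl (Sum.inl ⟨2 * i.val + c.val, by have := i.isLt; have := c.isLt; omega⟩)
    with hgP
  have hinjP : Function.Injective (fun p : Fin (ℓ / 2) × Fin 2 => gP p.1 p.2) := by
    rintro ⟨i, c⟩ ⟨j, d⟩ h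
    simp only [hgP, Sum.inl.injEq, Fin.mk.injEq] at h
    have hc := c.isLt; have hd := d.isLt
    have : i.val = j.val ∧ c.val = d.val := by omega
    exact Prod.ext (Fin.ext this.1) (Fin.ext this.2)
  obtain ⟨i0, hi0, hi1⟩ := avoid_pair gP hinjP U (by omega)
  have hP : ∀ c : Fin 2, gP i0 c ∉ U := by intro c; fin_cases c; exacts [hi0, hi1]
  -- turan part
  have hbound : ∀ (j : Fin (r-1)) (a : Fin m), j.val + (r-1) * a.val < m * (r-1) := by
    intro j a
    have h1 : a.val + 1 ≤ m := a.isLt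
    have h2 : (r-1) * (a.val + 1) ≤ (r-1) * m := Nat.mul_le_mul_left (r-1) h1
    have h3 : (r-1) * (a.val + 1) = (r-1) * a.val + (r-1) := by ring
    have h4 : (r-1) * m = m * (r-1) := Nat.mul_comm (r-1) m
    have := j.isLt
    omega
  set gT : Fin (r-1) → Fin m → (Fin ℓ ⊕ Fin m) ⊕ Fin (m * (r-1)) :=
    fun j a => Sum.inr ⟨j.val + (r-1) * a.val, hbound j a⟩ with hgT
  have hmod : ∀ (j : Fin (r-1)) (a : Fin m), (j.val + (r-1) * a.val) % (r-1) = j.val := by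
    intro j a
    rw [Nat.add_mul_mod_self_left, Nat.mod_eq_of_lt j.isLt]
  have hTex : ∀ j : Fin (r-1), ∃ a : Fin m, gT j a ∉ U := by
    intro j
    apply avoid_one (gT j) _ U (by omega)
    intro a b h
    simp only [hgT, Sum.inr.injEq, Fin.mk.injEq] at h
    have h2 : (r-1) * a.val = (r-1) * b.val := by omega
    exact Fin.ext (Nat.eq_of_mul_eq_mul_left (by omega) h2)
  choose tc htc using hTex
  -- the clique
  set f : Fin 2 ⊕ Fin (r-1) → ↥Uᶜ :=
    Sum.elim (fun c => ⟨gP i0 c, hP c⟩) (fun j => ⟨gT j (tc j), htc j⟩) with hf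
  have hfinj : Function.Injective f := by
    rintro (c | j) (d | j') h
    · have : gP i0 c = gP i0 d := congrArg Subtype.val h
      have := hinjP (a₁ := (i0, c)) (a₂ := (i0, d)) this
      simp only [Prod.mk.injEq] at this
      exact congrArg Sum.inl this.2
    · exact absurd (congrArg Subtype.val h) (by simp [hf, hgP, hgT])
    · exact absurd (congrArg Subtype.val h) (by simp [hf, hgP, hgT])
    · have h2 : gT j (tc j) = gT j' (tc j') := congrArg Subtype.val h
      simp only [hgT, Sum.inr.injEq, Fin.mk.injEq] at h2
      have h3 := congrArg (· % (r-1)) h2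
      simp only [hmod] at h3
      exact congrArg Sum.inr (Fin.ext h3)
  have hadj : ∀ x y : Fin 2 ⊕ Fin (r-1), x ≠ y →
      ((F₁ ℓ r m).induce Uᶜ).Adj (f x) (f y) := by
    rintro (c | j) (d | j') hxy
    · have hcd : c ≠ d := fun h => hxy (by rw [h])
      show (F₁ ℓ r m).Adj (gP i0 c) (gP i0 d)
      show (pathGraph ℓ).Adj _ _
      rw [pathGraph_adj]
      have hc := c.isLt; have hd := d.isLt
      have : c.val ≠ d.val := fun h => hcd (Fin.ext h)
      simp only []
      omega
    · show (F₁ ℓ r m).Adj (gP i0 c) (gT j' (tc j'))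
      exact trivial
    · show (F₁ ℓ r m).Adj (gT j (tc j)) (gP i0 d)
      exact trivial
    · have hjj : j ≠ j' := fun h => hxy (by rw [h])
      show (F₁ ℓ r m).Adj (gT j (tc j)) (gT j' (tc j'))
      show (turanGraph (m * (r-1)) (r-1)).Adj _ _
      show ¬ _ = _
      rw [hmod, hmod]
      exact fun h => hjj (Fin.ext h)
  have := clique_le_chrom _ f hfinj hadj
  have hcard : Fintype.card (Fin 2 ⊕ Fin (r-1)) = r + 1 := by simp; omega
  rw [hcard] at this
  have hcast : ((r + 1 : ℕ) : ℕ∞) = (r : ℕ∞) + 1 := by push_cast; ring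
  rwa [hcast] at this

lemma aux2 (ℓ r m : ℕ) (hℓ : 4 ≤ ℓ) (hr2 : 2 ≤ r) (hm : ℓ + 1 ≤ m)
    (U : Set (((Fin 1 ⊕ Fin 2) ⊕ Fin m × Fin 2) ⊕ Fin m × Fin 2 ⊕ Fin (m * (r - 2))))
    (hU : U.ncard ≤ (ℓ - 2) / 2) :
    ((r : ℕ∞) + 1) ≤ ((F₂ r m).induce Uᶜ).chromaticNumber := by
  set gA : Fin m → Fin 2 → ((Fin 1 ⊕ Fin 2) ⊕ Fin m × Fin 2) ⊕ Fin m × Fin 2 ⊕ Fin (m * (r - 2)) :=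
    fun i c => Sum.inl (Sum.inr (i, c)) with hgA
  set gB : Fin m → Fin 2 → ((Fin 1 ⊕ Fin 2) ⊕ Fin m × Fin 2) ⊕ Fin m × Fin 2 ⊕ Fin (m * (r - 2)) :=
    fun i c => Sum.inr (Sum.inl (i, c)) with hgB
  have hUm : U.ncard < m := by omega
  obtain ⟨iA, hA0, hA1⟩ := avoid_pair gA (by rintro ⟨i, c⟩ ⟨j, d⟩ h; simpa [hgA] using h) U hUm
  obtain ⟨iB, hB0, hB1⟩ := avoid_pair gB (by rintro ⟨i, c⟩ ⟨j, d⟩ h; simpa [hgB] using h) U hUm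
  have hA : ∀ c : Fin 2, gA iA c ∉ U := by intro c; fin_cases c; exacts [hA0, hA1]
  have hB : ∀ c : Fin 2, gB iB c ∉ U := by intro c; fin_cases c; exacts [hB0, hB1]
  have hbound : ∀ (j : Fin (r-2)) (a : Fin m), j.val + (r-2) * a.val < m * (r-2) := by
    intro j a
    have h1 : a.val + 1 ≤ m := a.isLt
    have h2 : (r-2) * (a.val + 1) ≤ (r-2) * m := Nat.mul_le_mul_left (r-2) h1
    have h3 : (r-2) * (a.val + 1) = (r-2) * a.val + (r-2) := by ring
    have h4 : (r-2) * m = m * (r-2) := Nat.mul_comm (r-2) m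
    have := j.isLt
    omega
  set gT : Fin (r-2) → Fin m →
      ((Fin 1 ⊕ Fin 2) ⊕ Fin m × Fin 2) ⊕ Fin m × Fin 2 ⊕ Fin (m * (r - 2)) :=
    fun j a => Sum.inr (Sum.inr ⟨j.val + (r-2) * a.val, hbound j a⟩) with hgT
  have hmod : ∀ (j : Fin (r-2)) (a : Fin m), (j.val + (r-2) * a.val) % (r-2) = j.val := by
    intro j a
    rw [Nat.add_mul_mod_self_left, Nat.mod_eq_of_lt j.isLt]
  have hTex : ∀ j : Fin (r-2), ∃ a : Fin m, gT j a ∉ U := by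
    intro j
    apply avoid_one (gT j) _ U (by omega)
    intro a b h
    simp only [hgT, Sum.inr.injEq, Fin.mk.injEq] at h
    have h2 : (r-2) * a.val = (r-2) * b.val := by omega
    exact Fin.ext (Nat.eq_of_mul_eq_mul_left (by have := j.isLt; omega) h2)
  choose tc htc using hTex
  set f : Fin 2 ⊕ Fin 2 ⊕ Fin (r-2) → ↥Uᶜ :=
    Sum.elim (fun c => ⟨gA iA c, hA c⟩)
      (Sum.elim (fun c => ⟨gB iB c, hB c⟩) (fun j => ⟨gT j (tc j), htc j⟩)) with hf
  have hfinj : Function.Injective f := by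
    rintro (c | c | j) (d | d | j') h <;>
      [skip; exact absurd (congrArg Subtype.val h) (by simp [hf, hgA, hgB, hgT]);
       exact absurd (congrArg Subtype.val h) (by simp [hf, hgA, hgB, hgT]);
       exact absurd (congrArg Subtype.val h) (by simp [hf, hgA, hgB, hgT]);
       skip; exact absurd (congrArg Subtype.val h) (by simp [hf, hgA, hgB, hgT]);
       exact absurd (congrArg Subtype.val h) (by simp [hf, hgA, hgB, hgT]);
       exact absurd (congrArg Subtype.val h) (by simp [hf, hgA, hgB, hgT]); skip]
    · have h2 : gA iA c = gA iA d := congrArg Subtype.val h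
      simp only [hgA, Sum.inl.injEq, Sum.inr.injEq, Prod.mk.injEq] at h2
      exact congrArg Sum.inl h2.2
    · have h2 : gB iB c = gB iB d := congrArg Subtype.val h
      simp only [hgB, Sum.inl.injEq, Sum.inr.injEq, Prod.mk.injEq] at h2
      rw [h2.2]
    · have h2 : gT j (tc j) = gT j' (tc j') := congrArg Subtype.val h
      simp only [hgT, Sum.inr.injEq, Fin.mk.injEq] at h2
      have h3 := congrArg (· % (r-2)) h2
      simp only [hmod] at h3
      exact congrArg Sum.inr (congrArg Sum.inr (Fin.ext h3))
  have hadj : ∀ x y : Fin 2 ⊕ Fin 2 ⊕ Fin (r-2), x ≠ y →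
      ((F₂ r m).induce Uᶜ).Adj (f x) (f y) := by
    rintro (c | c | j) (d | d | j') hxy
    · have hcd : c ≠ d := fun h => hxy (by rw [h])
      show (F₂ r m).Adj (gA iA c) (gA iA d)
      show (gCopies m (⊤ : SimpleGraph (Fin 2))).Adj (iA, c) (iA, d)
      exact ⟨rfl, hcd⟩
    · exact trivial
    · exact trivial
    · exact trivial
    · have hcd : c ≠ d := fun h => hxy (by rw [h])
      show (F₂ r m).Adj (gB iB c) (gB iB d)
      show (gCopies m (⊤ : SimpleGraph (Fin 2))).Adj (iB, c) (iB, d)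
      exact ⟨rfl, hcd⟩
    · exact trivial
    · exact trivial
    · exact trivial
    · have hjj : j ≠ j' := fun h => hxy (by rw [h])
      show (F₂ r m).Adj (gT j (tc j)) (gT j' (tc j'))
      show (turanGraph (m * (r-2)) (r-2)).Adj _ _
      show ¬ _ = _
      rw [hmod, hmod]
      exact fun h => hjj (Fin.ext h)
  have hle := clique_le_chrom _ f hfinj hadj
  have hcard : Fintype.card (Fin 2 ⊕ Fin 2 ⊕ Fin (r-2)) = r + 2 := by simp; omega
  rw [hcard] at hle
  refine le_trans ?_ hle
  have hcast : ((r + 2 : ℕ) : ℕ∞) = (r : ℕ∞) + 2 := by push_cast; ring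
  rw [hcast]
  exact add_le_add (le_refl _) (by norm_num)

lemma aux3 (ℓ r m : ℕ) (hℓ : 4 ≤ ℓ) (heven : Even ℓ) (hr2 : 2 ≤ r) (hm : ℓ + 1 ≤ m)
    (U : Set (((Fin (ℓ / 2) ⊕ Fin (ℓ - 1)) ⊕ Fin m) ⊕ Fin (m * (r - 1))))
    (hU : U.ncard ≤ (ℓ - 2) / 2) :
    ((r : ℕ∞) + 1) ≤ ((F₃ ℓ r m).induce Uᶜ).chromaticNumber := by
  obtain ⟨k, hk⟩ := heven
  -- pairs inside K_{ℓ-1}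
  set g : Fin ((ℓ-2)/2) → Fin 2 → ((Fin (ℓ / 2) ⊕ Fin (ℓ - 1)) ⊕ Fin m) ⊕ Fin (m * (r - 1)) :=
    fun i c => Sum.inl (Sum.inl (Sum.inr ⟨2 * i.val + c.val,
      by have := i.isLt; have := c.isLt; omega⟩)) with hg
  -- the fallback pair inside K_{ℓ/2}
  set e : Fin 2 → ((Fin (ℓ / 2) ⊕ Fin (ℓ - 1)) ⊕ Fin m) ⊕ Fin (m * (r - 1)) :=
    fun c => Sum.inl (Sum.inl (Sum.inl ⟨c.val, by have := c.isLt; omega⟩)) with he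
  have hcomb : Function.Injective
      (fun p : Fin ((ℓ-2)/2) × Fin 2 ⊕ Fin 2 => p.elim (fun q => g q.1 q.2) e) := by
    rintro (⟨i, c⟩ | c) (⟨j, d⟩ | d) h
    · simp only [hg, Sum.elim_inl, Sum.inl.injEq, Sum.inr.injEq, Fin.mk.injEq] at h
      have hc := c.isLt; have hd := d.isLt
      have : i.val = j.val ∧ c.val = d.val := by omega
      exact congrArg Sum.inl (Prod.ext (Fin.ext this.1) (Fin.ext this.2))
    · exact absurd h (by simp [hg, he])
    · exact absurd h (by simp [hg, he])
    · simp only [he, Sum.elim_inr, Sum.inl.injEq, Fin.mk.injEq] at h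
      exact congrArg Sum.inr (Fin.ext h)
  have hor := avoid_pair_or g e hcomb U hU
  -- extract a good pair in the union-of-cliques part
  have hpair : ∃ p : Fin 2 → Fin (ℓ / 2) ⊕ Fin (ℓ - 1),
      (gUnion (⊤ : SimpleGraph (Fin (ℓ / 2))) (⊤ : SimpleGraph (Fin (ℓ - 1)))).Adj (p 0) (p 1) ∧
      ∀ c : Fin 2, Sum.inl (Sum.inl (p c)) ∉ U := by
    rcases hor with ⟨i, h0, h1⟩ | ⟨h0, h1⟩
    · refine ⟨fun c => Sum.inr ⟨2 * i.val + c.val, by have := i.isLt; have := c.isLt; omega⟩,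
        ?_, ?_⟩
      · show ((⊤ : SimpleGraph (Fin (ℓ - 1))).Adj _ _)
        simp [Fin.ext_iff]
      · intro c; fin_cases c; exacts [h0, h1]
    · refine ⟨fun c => Sum.inl ⟨c.val, by have := c.isLt; omega⟩, ?_, ?_⟩
      · show ((⊤ : SimpleGraph (Fin (ℓ / 2))).Adj _ _)
        simp [Fin.ext_iff]
      · intro c; fin_cases c; exacts [h0, h1]
  obtain ⟨p, hpadj, hpU⟩ := hpair
  have hpinj : p 0 ≠ p 1 := (gUnion _ _).ne_of_adj hpadj
  -- turan part
  have hbound : ∀ (j : Fin (r-1)) (a : Fin m), j.val + (r-1) * a.val < m * (r-1) := by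
    intro j a
    have h1 : a.val + 1 ≤ m := a.isLt
    have h2 : (r-1) * (a.val + 1) ≤ (r-1) * m := Nat.mul_le_mul_left (r-1) h1
    have h3 : (r-1) * (a.val + 1) = (r-1) * a.val + (r-1) := by ring
    have h4 : (r-1) * m = m * (r-1) := Nat.mul_comm (r-1) m
    have := j.isLt
    omega
  set gT : Fin (r-1) → Fin m → ((Fin (ℓ / 2) ⊕ Fin (ℓ - 1)) ⊕ Fin m) ⊕ Fin (m * (r - 1)) :=
    fun j a => Sum.inr ⟨j.val + (r-1) * a.val, hbound j a⟩ with hgT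
  have hmod : ∀ (j : Fin (r-1)) (a : Fin m), (j.val + (r-1) * a.val) % (r-1) = j.val := by
    intro j a
    rw [Nat.add_mul_mod_self_left, Nat.mod_eq_of_lt j.isLt]
  have hTex : ∀ j : Fin (r-1), ∃ a : Fin m, gT j a ∉ U := by
    intro j
    apply avoid_one (gT j) _ U (by omega)
    intro a b h
    simp only [hgT, Sum.inr.injEq, Fin.mk.injEq] at h
    have h2 : (r-1) * a.val = (r-1) * b.val := by omega
    exact Fin.ext (Nat.eq_of_mul_eq_mul_left (by omega) h2)
  choose tc htc using hTex
  set f : Fin 2 ⊕ Fin (r-1) → ↥Uᶜ :=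
    Sum.elim (fun c => ⟨Sum.inl (Sum.inl (p c)), hpU c⟩)
      (fun j => ⟨gT j (tc j), htc j⟩) with hf
  have hfinj : Function.Injective f := by
    rintro (c | j) (d | j') h
    · have h2 : Sum.inl (Sum.inl (p c)) =
          (Sum.inl (Sum.inl (p d)) : ((Fin (ℓ / 2) ⊕ Fin (ℓ - 1)) ⊕ Fin m) ⊕ Fin (m * (r - 1))) :=
        congrArg Subtype.val h
      simp only [Sum.inl.injEq] at h2
      by_contra hne
      have hcd : c ≠ d := fun hh => hne (by rw [hh])
      fin_cases c <;> fin_cases d <;> simp_all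
    · exact absurd (congrArg Subtype.val h) (by simp [hf, hgT])
    · exact absurd (congrArg Subtype.val h) (by simp [hf, hgT])
    · have h2 : gT j (tc j) = gT j' (tc j') := congrArg Subtype.val h
      simp only [hgT, Sum.inr.injEq, Fin.mk.injEq] at h2
      have h3 := congrArg (· % (r-1)) h2
      simp only [hmod] at h3
      exact congrArg Sum.inr (Fin.ext h3)
  have hadj : ∀ x y : Fin 2 ⊕ Fin (r-1), x ≠ y →
      ((F₃ ℓ r m).induce Uᶜ).Adj (f x) (f y) := by
    rintro (c | j) (d | j') hxy
    · have hcd : c ≠ d := fun h => hxy (by rw [h])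
      show (F₃ ℓ r m).Adj (Sum.inl (Sum.inl (p c))) (Sum.inl (Sum.inl (p d)))
      show (gUnion (⊤ : SimpleGraph (Fin (ℓ / 2))) (⊤ : SimpleGraph (Fin (ℓ - 1)))).Adj (p c) (p d)
      fin_cases c <;> fin_cases d <;> first | exact absurd rfl hcd | exact hpadj | exact hpadj.symm
    · show (F₃ ℓ r m).Adj (Sum.inl (Sum.inl (p c))) (gT j' (tc j'))
      exact trivial
    · show (F₃ ℓ r m).Adj (gT j (tc j)) (Sum.inl (Sum.inl (p d)))
      exact trivial
    · have hjj : j ≠ j' := fun h => hxy (by rw [h])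
      show (F₃ ℓ r m).Adj (gT j (tc j)) (gT j' (tc j'))
      show (turanGraph (m * (r-1)) (r-1)).Adj _ _
      show ¬ _ = _
      rw [hmod, hmod]
      exact fun h => hjj (Fin.ext h)
  have hle := clique_le_chrom _ f hfinj hadj
  have hcard : Fintype.card (Fin 2 ⊕ Fin (r-1)) = r + 1 := by simp; omega
  rw [hcard] at hle
  have hcast : ((r + 1 : ℕ) : ℕ∞) = (r : ℕ∞) + 1 := by push_cast; ring
  rwa [hcast] at hle

lemma copy_colorable {α : Type*} (F : SimpleGraph α) {s n r : ℕ} (hr : 0 < r)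
    (h : ContainsCopy F (gJoin (⊤ : SimpleGraph (Fin s)) (turanGraph n r))) :
    ∃ U : Set α, U.ncard ≤ s ∧ (F.induce Uᶜ).Colorable r := by
  obtain ⟨f, hfinj, hfadj⟩ := h
  refine ⟨{v | ∃ a : Fin s, f v = Sum.inl a}, ?_, ?_⟩
  · choose φ hφ using fun v : {v | ∃ a : Fin s, f v = Sum.inl a} => v.prop
    have hφinj : Function.Injective φ := by
      intro v w hvw
      have h2 : f v.val = f w.val := by rw [hφ v, hφ w, hvw]
      exact Subtype.ext (hfinj h2)
    have := Nat.card_le_card_of_injective φ hφinj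
    simpa [Nat.card_coe_set_eq, Nat.card_eq_fintype_card] using this
  · have hcol : ∀ v : ↥{v | ∃ a : Fin s, f v = Sum.inl a}ᶜ, ∃ b : Fin n, f v.val = Sum.inr b := by
      intro v
      cases hfv : f v.val with
      | inl a => exact absurd ⟨a, hfv⟩ v.prop
      | inr b => exact ⟨b, rfl⟩
    choose ψ hψ using hcol
    refine ⟨SimpleGraph.Coloring.mk (fun v => ⟨(ψ v).val % r, Nat.mod_lt _ hr⟩) ?_⟩
    intro v w hvw hcontra
    have hadj : (gJoin (⊤ : SimpleGraph (Fin s)) (turanGraph n r)).Adj (f v.val) (f w.val) :=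
      hfadj hvw
    rw [hψ v, hψ w] at hadj
    have h3 : (ψ v).val % r ≠ (ψ w).val % r := hadj
    exact h3 (by simpa [Fin.ext_iff] using hcontra)

/-- **Proposition.** For even `ℓ ≥ 4`, `2 ≤ r ≤ ℓ-2`, `m ≥ ℓ+1`: the graph
`K_{(ℓ-2)/2} ⊗ T(n - (ℓ-2)/2, r)` is `{F₁,F₂,F₃}`-free for every `n`; indeed deleting any
set of `(ℓ-2)/2` vertices from any `F_i` leaves a graph of chromatic number at least
`r + 1`. -/
theorem target_is_free (ℓ r m : ℕ) (hℓ : 4 ≤ ℓ) (heven : Even ℓ)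
    (hr2 : 2 ≤ r) (hrℓ : r ≤ ℓ - 2) (hm : ℓ + 1 ≤ m) :
    (∀ n : ℕ,
      ¬ ContainsCopy (F₁ ℓ r m)
        (gJoin (⊤ : SimpleGraph (Fin ((ℓ - 2) / 2))) (turanGraph (n - (ℓ - 2) / 2) r)) ∧
      ¬ ContainsCopy (F₂ r m)
        (gJoin (⊤ : SimpleGraph (Fin ((ℓ - 2) / 2))) (turanGraph (n - (ℓ - 2) / 2) r)) ∧
      ¬ ContainsCopy (F₃ ℓ r m)
        (gJoin (⊤ : SimpleGraph (Fin ((ℓ - 2) / 2))) (turanGraph (n - (ℓ - 2) / 2) r))) ∧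
    (∀ U : Set ((Fin ℓ ⊕ Fin m) ⊕ Fin (m * (r - 1))), U.ncard = (ℓ - 2) / 2 →
      ((r : ℕ∞) + 1) ≤ ((F₁ ℓ r m).induce Uᶜ).chromaticNumber) ∧
    (∀ U : Set (((Fin 1 ⊕ Fin 2) ⊕ Fin m × Fin 2) ⊕ Fin m × Fin 2 ⊕ Fin (m * (r - 2))),
      U.ncard = (ℓ - 2) / 2 →
      ((r : ℕ∞) + 1) ≤ ((F₂ r m).induce Uᶜ).chromaticNumber) ∧
    (∀ U : Set (((Fin (ℓ / 2) ⊕ Fin (ℓ - 1)) ⊕ Fin m) ⊕ Fin (m * (r - 1))),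
      U.ncard = (ℓ - 2) / 2 →
      ((r : ℕ∞) + 1) ≤ ((F₃ ℓ r m).induce Uᶜ).chromaticNumber) := by
  have hr0 : 0 < r := by omega
  refine ⟨fun n => ⟨?_, ?_, ?_⟩,
    fun U hU => aux1 ℓ r m hℓ heven hr2 hm U (le_of_eq hU),
    fun U hU => aux2 ℓ r m hℓ hr2 hm U (le_of_eq hU),
    fun U hU => aux3 ℓ r m hℓ heven hr2 hm U (le_of_eq hU)⟩
  · intro hcopy
    obtain ⟨U, hU, hcol⟩ := copy_colorable _ hr0 hcopy
    have h1 := aux1 ℓ r m hℓ heven hr2 hm U hU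
    have h2 := hcol.chromaticNumber_le
    have h3 : ((r + 1 : ℕ) : ℕ∞) ≤ ((r : ℕ) : ℕ∞) := by push_cast; exact le_trans h1 h2
    rw [Nat.cast_le] at h3
    omega
  · intro hcopy
    obtain ⟨U, hU, hcol⟩ := copy_colorable _ hr0 hcopy
    have h1 := aux2 ℓ r m hℓ hr2 hm U hU
    have h2 := hcol.chromaticNumber_le
    have h3 : ((r + 1 : ℕ) : ℕ∞) ≤ ((r : ℕ) : ℕ∞) := by push_cast; exact le_trans h1 h2
    rw [Nat.cast_le] at h3
    omega
  · intro hcopy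
    obtain ⟨U, hU, hcol⟩ := copy_colorable _ hr0 hcopy
    have h1 := aux3 ℓ r m hℓ heven hr2 hm U hU
    have h2 := hcol.chromaticNumber_le
    have h3 : ((r + 1 : ℕ) : ℕ∞) ≤ ((r : ℕ) : ℕ∞) := by push_cast; exact le_trans h1 h2
    rw [Nat.cast_le] at h3
    omega
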